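/- arXiv:0905.2671 — 3 statements merged into one kernel-verified Lean document; each statement's English description precedes it below -/
import Mathlib

section
/- Let K be a strictly convex compact body in ℝ^d with nonempty interior. For p in K and a unit vector e, define a(p,e) = max {a ≥ 0 : p + a·e ∈ K}. Then the function (p,e) ↦ a(p,e) is continuous on K × S^{d-1}. -/
open Metric Set

/-- For a strictly convex compact body `K ⊆ ℝ^d` with nonempty interior, the function
`(p, e) ↦ max {a ≥ 0 : p + a • e ∈ K}` is continuous on `K × S^{d-1}`. -/
theorem stmt1 (d : ℕ) (K : Set (EuclideanSpace ℝ (Fin d)))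
    (hKcomp : IsCompact K) (hKconv : StrictConvex ℝ K) (hKint : (interior K).Nonempty) :
    ContinuousOn
      (fun pe : EuclideanSpace ℝ (Fin d) × EuclideanSpace ℝ (Fin d) =>
        sSup {a : ℝ | 0 ≤ a ∧ pe.1 + a • pe.2 ∈ K})
      (K ×ˢ sphere (0 : EuclideanSpace ℝ (Fin d)) 1) := by
  have hKconv' : Convex ℝ K := hKconv.convex
  have hKcl : IsClosed K := hKcomp.isClosed
  obtain ⟨R, hR⟩ := hKcomp.isBounded.subset_closedBall 0
  set A : EuclideanSpace ℝ (Fin d) × EuclideanSpace ℝ (Fin d) → Set ℝ :=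
    fun pe => {a : ℝ | 0 ≤ a ∧ pe.1 + a • pe.2 ∈ K} with hA
  have hsub : ∀ pe ∈ K ×ˢ sphere (0 : EuclideanSpace ℝ (Fin d)) 1, A pe ⊆ Icc 0 (2 * R) := by
    rintro ⟨p, e⟩ ⟨hp, he⟩ a ⟨ha0, haK⟩
    refine ⟨ha0, ?_⟩
    have h1 : ‖p + a • e‖ ≤ R := by simpa using hR haK
    have h2 : ‖p‖ ≤ R := by simpa using hR hp
    have he1 : ‖e‖ = 1 := by simpa using he
    have key : a = ‖(p + a • e) - p‖ := by
      simp [norm_smul, he1, abs_of_nonneg ha0]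
    calc a = ‖(p + a • e) - p‖ := key
      _ ≤ ‖p + a • e‖ + ‖p‖ := norm_sub_le _ _
      _ ≤ 2 * R := by linarith
  -- basic facts about the sup for points in `K ×ˢ sphere 0 1`
  have key : ∀ pe ∈ K ×ˢ sphere (0 : EuclideanSpace ℝ (Fin d)) 1,
      0 ≤ sSup (A pe) ∧ pe.1 + sSup (A pe) • pe.2 ∈ K ∧ BddAbove (A pe) := by
    rintro ⟨p, e⟩ hpe
    have h0 : (0 : ℝ) ∈ A (p, e) := ⟨le_refl 0, by simpa using hpe.1⟩
    have hcl : IsClosed (A (p, e)) := by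
      have : A (p, e) = Ici (0 : ℝ) ∩ (fun a : ℝ => p + a • e) ⁻¹' K := rfl
      rw [this]
      exact isClosed_Ici.inter (hKcl.preimage (by continuity))
    have hcomp : IsCompact (A (p, e)) :=
      isCompact_Icc.of_isClosed_subset hcl (hsub (p, e) hpe)
    have hmem : sSup (A (p, e)) ∈ A (p, e) := hcomp.sSup_mem ⟨0, h0⟩
    exact ⟨hmem.1, hmem.2, ⟨2 * R, fun a ha => (hsub (p, e) hpe ha).2⟩⟩
  intro pe hpe
  have hf := key pe hpe
  rw [ContinuousWithinAt]
  refine tendsto_order.2 ⟨?_, ?_⟩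
  · -- lower semicontinuity
    intro c hc
    rcases lt_or_ge c 0 with hc0 | hc0
    · filter_upwards [self_mem_nhdsWithin] with pe' hpe'
      exact hc0.trans_le (key pe' hpe').1
    · set L := sSup (A pe) with hL
      set c' := (c + L) / 2 with hc'
      have hcc' : c < c' := by simp only [hc']; linarith
      have hc'L : c' < L := by simp only [hc']; linarith
      have hc'0 : 0 < c' := lt_of_le_of_lt hc0 hcc'
      have hL0 : 0 < L := hc0.trans_lt hc
      have hy : pe.1 + L • pe.2 ∈ K := hf.2.1
      have he1 : ‖pe.2‖ = 1 := by simpa using hpe.2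
      have hne : pe.1 ≠ pe.1 + L • pe.2 := by
        intro h
        have : L • pe.2 = 0 := (left_eq_add.mp h)
        rcases smul_eq_zero.mp this with h' | h'
        · exact hL0.ne' h'
        · rw [h'] at he1; simp at he1
      have ht0 : 0 < c' / L := div_pos hc'0 hL0
      have ht1 : 0 < 1 - c' / L := by
        have : c' / L < 1 := (div_lt_one hL0).mpr hc'L
        linarith
      have hint0 := hKconv hpe.1 hy hne ht1 ht0 (by ring)
      have heq : (1 - c' / L) • pe.1 + (c' / L) • (pe.1 + L • pe.2) = pe.1 + c' • pe.2 := by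
        have hdl : c' / L * L = c' := div_mul_cancel₀ _ hL0.ne'
        rw [smul_add, smul_smul, hdl, sub_smul, one_smul]
        abel
      rw [heq] at hint0
      have hcont : Continuous fun pe' : EuclideanSpace ℝ (Fin d) × EuclideanSpace ℝ (Fin d) =>
          pe'.1 + c' • pe'.2 := continuous_fst.add (continuous_snd.const_smul c')
      have hev : ∀ᶠ pe' in nhds pe, pe'.1 + c' • pe'.2 ∈ interior K :=
        hcont.continuousAt.eventually_mem (isOpen_interior.mem_nhds hint0)
      filter_upwards [hev.filter_mono nhdsWithin_le_nhds, self_mem_nhdsWithin] with pe' h1 h2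
      have : c' ∈ A pe' := ⟨hc'0.le, interior_subset h1⟩
      exact hcc'.trans_le (le_csSup (key pe' h2).2.2 this)
  · -- upper semicontinuity
    intro c hc
    have hc0 : 0 < c := hf.1.trans_lt hc
    have hnot : pe.1 + c • pe.2 ∉ K := by
      intro h
      exact absurd (le_csSup hf.2.2 ⟨hc0.le, h⟩) (not_le.2 hc)
    have hcont : Continuous fun pe' : EuclideanSpace ℝ (Fin d) × EuclideanSpace ℝ (Fin d) =>
        pe'.1 + c • pe'.2 := continuous_fst.add (continuous_snd.const_smul c)
    have hev : ∀ᶠ pe' in nhds pe, pe'.1 + c • pe'.2 ∈ Kᶜ :=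
      hcont.continuousAt.eventually_mem (hKcl.isOpen_compl.mem_nhds hnot)
    filter_upwards [hev.filter_mono nhdsWithin_le_nhds, self_mem_nhdsWithin] with pe' h1 h2
    by_contra h
    push_neg at h
    have hf' := key pe' h2
    set L' := sSup (A pe') with hL'
    have hL'0 : 0 < L' := hc0.trans_le h
    have ht0 : 0 ≤ c / L' := le_of_lt (div_pos hc0 hL'0)
    have ht1 : 0 ≤ 1 - c / L' := by
      have : c / L' ≤ 1 := (div_le_one hL'0).mpr h
      linarith
    have hy' : pe'.1 + L' • pe'.2 ∈ K := hf'.2.1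
    have hmem := hKconv' h2.1 hy' ht1 ht0 (by ring)
    have heq : (1 - c / L') • pe'.1 + (c / L') • (pe'.1 + L' • pe'.2) = pe'.1 + c • pe'.2 := by
      have hdl : c / L' * L' = c := div_mul_cancel₀ _ hL'0.ne'
      rw [smul_add, smul_smul, hdl, sub_smul, one_smul]
      abel
    rw [heq] at hmem
    exact h1 hmem
end

section
/- Let K be a non-angular convex body in ℝ^d and let (p,r) ∈ ∂K × SO(d), where r determines an orthonormal frame (e_1,…,e_d). Define a_i = max{a ≥ 0 : p + a e_i ∈ K}, b_i = max{a ≥ 0 : p − a e_i ∈ K}, and set t_i = a_i − b_i, s_i = a_i + b_i. Then the vector (t_1,…,t_d, s_1 − s_2, s_2 − s_3, …, s_{d−1} − s_d) ∈ ℝ^{2d−1} is nonzero. -/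
open Metric Set

lemma aux_between {d : ℕ} {K : Set (EuclideanSpace ℝ (Fin d))}
    (hKconv : Convex ℝ K) {p u : EuclideanSpace ℝ (Fin d)} (hpni : p ∉ interior K)
    {t s : ℝ} (ht : 0 < t) (hs : 0 < s)
    (hq : p + t • u ∈ interior K) (hr : p - s • u ∈ K) : False := by
  have hts : (0:ℝ) < t + s := by linarith
  have hcomb : (s / (t + s)) • (p + t • u) + (t / (t + s)) • (p - s • u) = p := by
    have h1 : s / (t + s) + t / (t + s) = 1 := by field_simp; ring
    have h2 : (s / (t + s)) * t - (t / (t + s)) * s = 0 := by field_simp; ring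
    rw [smul_add, smul_sub, smul_smul, smul_smul]
    rw [show (s / (t + s)) • p + (s / (t + s) * t) • u + ((t / (t + s)) • p
        - (t / (t + s) * s) • u) = (s / (t + s) + t / (t + s)) • p
        + (s / (t + s) * t - t / (t + s) * s) • u by module]
    rw [h1, h2, one_smul, zero_smul, add_zero]
  have := hKconv.combo_interior_self_mem_interior hq hr
    (div_pos hs hts) (le_of_lt (div_pos ht hts)) (by field_simp; ring)
  rw [hcomb] at this
  exact hpni this

/-- Let `K ⊆ ℝ^d` be a non-angular convex body, `p ∈ ∂K`, and `(e_1, …, e_d)` an orthonormal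
frame. With `a i = max {a ≥ 0 : p + a • e i ∈ K}` and `b i = max {a ≥ 0 : p - a • e i ∈ K}`,
the vector `(a 1 - b 1, …, a d - b d, (a 1 + b 1) - (a 2 + b 2), …)` is nonzero; that is,
it is impossible that all `a i = b i` and all the sums `a i + b i` are equal. -/
theorem stmt3 (d : ℕ) (K : Set (EuclideanSpace ℝ (Fin d)))
    (hKconv : Convex ℝ K) (hKcomp : IsCompact K) (hKint : (interior K).Nonempty)
    (hna : ∀ o ∈ frontier K, ∀ v : Fin d → EuclideanSpace ℝ (Fin d), Orthonormal ℝ v →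
      ∃ (i : Fin d) (t : ℝ), o + t • v i ∈ interior K)
    (p : EuclideanSpace ℝ (Fin d)) (hp : p ∈ frontier K)
    (e : Fin d → EuclideanSpace ℝ (Fin d)) (he : Orthonormal ℝ e)
    (a b : Fin d → ℝ)
    (ha : ∀ i, IsGreatest {t : ℝ | 0 ≤ t ∧ p + t • e i ∈ K} (a i))
    (hb : ∀ i, IsGreatest {t : ℝ | 0 ≤ t ∧ p - t • e i ∈ K} (b i)) :
    ¬ ((∀ i, a i - b i = 0) ∧ (∀ i j : Fin d, (a i + b i) - (a j + b j) = 0)) := by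
  rintro ⟨hab, -⟩
  have hab' : ∀ i, a i = b i := fun i => by have := hab i; linarith
  have hpni : p ∉ interior K := fun h => hp.2 h
  obtain ⟨i, t, hti⟩ := hna p hp e he
  have ht0 : t ≠ 0 := by
    rintro rfl
    rw [zero_smul, add_zero] at hti
    exact hpni hti
  rcases ht0.lt_or_gt with htneg | htpos
  · -- t < 0 : use a i > 0
    have hbmem : -t ∈ {t : ℝ | 0 ≤ t ∧ p - t • e i ∈ K} := by
      refine ⟨by linarith, ?_⟩
      have : p - (-t) • e i = p + t • e i := by module
      rw [this]; exact interior_subset hti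
    have hbi : 0 < b i := lt_of_lt_of_le (by linarith) ((hb i).2 hbmem)
    have hai : 0 < a i := (hab' i) ▸ hbi
    have hqa : p + (-t) • (-(e i)) ∈ interior K := by
      have : p + (-t) • (-(e i)) = p + t • e i := by module
      rw [this]; exact hti
    have hra : p - (a i) • (-(e i)) ∈ K := by
      have : p - (a i) • (-(e i)) = p + (a i) • e i := by module
      rw [this]; exact (ha i).1.2
    exact aux_between hKconv hpni (by linarith) hai hqa hra
  · -- t > 0 : use b i > 0
    have hamem : t ∈ {t : ℝ | 0 ≤ t ∧ p + t • e i ∈ K} :=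
      ⟨htpos.le, interior_subset hti⟩
    have hai : 0 < a i := lt_of_lt_of_le htpos ((ha i).2 hamem)
    have hbi : 0 < b i := (hab' i) ▸ hai
    have hrb : p - (b i) • e i ∈ K := (hb i).1.2
    exact aux_between hKconv hpni htpos hbi hti hrb
end

section
/- Let K and K_n be convex bodies in ℝ^d with K_n → K in the Hausdorff metric, and let l_n be lines converging to a line l such that l meets int K in an open segment σ. Then for large n, l_n meets int K_n in an open segment σ_n, and the midpoints of σ_n converge to the midpoint of σ, and the lengths of σ_n converge to the length of σ. -/
set_option maxHeartbeats 1000000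
open Metric Set Filter
open scoped RealInnerProductSpace

section Aux

/-- If a convex closed nonempty set `C` is within `δ` of every point of `ball q ε`,
then it contains `ball q (ε - δ)`. -/
lemma sep_ball_subset {E : Type*} [NormedAddCommGroup E] [InnerProductSpace ℝ E]
    [CompleteSpace E] {C : Set E} (hC : Convex ℝ C) (hCc : IsClosed C) (hne : C.Nonempty)
    (q : E) {ε δ : ℝ} (hδ : 0 ≤ δ) (hδε : δ < ε)
    (hsub : ∀ w ∈ ball q ε, infDist w C ≤ δ) : ball q (ε - δ) ⊆ C := by
  intro z hz
  by_contra hzC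
  obtain ⟨f, u, hfc, huz⟩ := geometric_hahn_banach_closed_point hC hCc hzC
  set a : E := (InnerProductSpace.toDual ℝ E).symm f with ha_def
  have ha : ∀ x : E, (⟪a, x⟫ : ℝ) = f x := fun x => InnerProductSpace.toDual_symm_apply
  have hane : a ≠ 0 := by
    intro h0
    obtain ⟨c, hc⟩ := hne
    have h1 : f c < f z := lt_trans (hfc c hc) huz
    have h2 : f c = 0 := by rw [← ha, h0, inner_zero_left]
    have h3 : f z = 0 := by rw [← ha, h0, inner_zero_left]
    rw [h2, h3] at h1; exact lt_irrefl _ h1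
  have hna : 0 < ‖a‖ := norm_pos_iff.2 hane
  set w : E := z + (δ / ‖a‖) • a with hw_def
  have hwball : w ∈ ball q ε := by
    rw [mem_ball] at hz ⊢
    calc dist w q ≤ dist w z + dist z q := dist_triangle _ _ _
      _ = ‖(δ / ‖a‖) • a‖ + dist z q := by
          rw [dist_eq_norm, hw_def, add_sub_cancel_left]
      _ = δ + dist z q := by
          rw [norm_smul, Real.norm_eq_abs, abs_of_nonneg (by positivity), div_mul_cancel₀ _ hna.ne']
      _ < ε := by linarith
  have hfw : f w = f z + δ * ‖a‖ := by
    rw [← ha, hw_def, inner_add_right, inner_smul_right, real_inner_self_eq_norm_mul_norm, ha]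
    field_simp
  set gap : ℝ := (f z - u) / ‖a‖ with hgap_def
  have hgap : 0 < gap := div_pos (by linarith) hna
  have hlt : infDist w C < δ + gap := lt_of_le_of_lt (hsub w hwball) (by linarith)
  obtain ⟨c, hcC, hdc⟩ := (infDist_lt_iff hne).1 hlt
  have hfwc : f w - f c ≤ ‖a‖ * ‖w - c‖ := by
    have := real_inner_le_norm a (w - c)
    rw [inner_sub_right, ha, ha] at this
    linarith
  have h1 : ‖w - c‖ < δ + gap := by rwa [← dist_eq_norm]
  have h2 : f c < u := hfc c hcC
  have h3 : ‖a‖ * ‖w - c‖ ≤ ‖a‖ * (δ + gap) := by nlinarith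
  have h4 : ‖a‖ * gap = f z - u := by rw [hgap_def]; field_simp
  nlinarith [hfw, hfwc, h2, h3, h4, huz]

/-- Chord structure: for a compact set `C` containing a ball centered on the line,
the parameter set is nonempty with a least and greatest element, separated. -/
lemma chord_struct {E : Type*} [NormedAddCommGroup E] [NormedSpace ℝ E]
    {C : Set E} (hcomp : IsCompact C) (pt u : E) (hu : ‖u‖ = 1) (t0 : ℝ) {ε : ℝ}
    (hε : 0 < ε) (hball : ball (pt + t0 • u) ε ⊆ C) :
    IsLeast {t : ℝ | pt + t • u ∈ C} (sInf {t : ℝ | pt + t • u ∈ C}) ∧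
    IsGreatest {t : ℝ | pt + t • u ∈ C} (sSup {t : ℝ | pt + t • u ∈ C}) ∧
    sInf {t : ℝ | pt + t • u ∈ C} ≤ t0 - ε / 2 ∧
    t0 + ε / 2 ≤ sSup {t : ℝ | pt + t • u ∈ C} := by
  set S := {t : ℝ | pt + t • u ∈ C} with hS
  obtain ⟨R, hR⟩ := hcomp.isBounded.subset_closedBall 0
  have hSsub : S ⊆ Icc (-(R + ‖pt‖)) (R + ‖pt‖) := by
    intro t ht
    have h1 : ‖pt + t • u‖ ≤ R := by simpa [dist_eq_norm] using hR ht
    have h2 : |t| ≤ R + ‖pt‖ := by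
      have : ‖t • u‖ = ‖(pt + t • u) - pt‖ := by rw [add_sub_cancel_left]
      rw [norm_smul, hu, Real.norm_eq_abs, mul_one] at this
      have h3 := norm_sub_le (pt + t • u) pt
      linarith [this, h3, h1]
    exact abs_le.1 h2
  have hScl : IsClosed S := by
    have : Continuous fun t : ℝ => pt + t • u := by continuity
    exact hcomp.isClosed.preimage this
  have hScomp : IsCompact S := isCompact_Icc.of_isClosed_subset hScl hSsub
  have hmem : ∀ s : ℝ, |s - t0| < ε → s ∈ S := by
    intro s hs
    apply hball
    rw [mem_ball, dist_eq_norm]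
    have : pt + s • u - (pt + t0 • u) = (s - t0) • u := by
      rw [sub_smul]; abel
    rw [this, norm_smul, hu, mul_one, Real.norm_eq_abs]
    exact hs
  have hne : S.Nonempty := ⟨t0, hmem t0 (by simpa using hε)⟩
  obtain ⟨xa, hxa⟩ := hScomp.exists_isLeast hne
  obtain ⟨ya, hya⟩ := hScomp.exists_isGreatest hne
  have hxeq : sInf S = xa := hxa.csInf_eq
  have hyeq : sSup S = ya := hya.csSup_eq
  have hm1 : t0 - ε / 2 ∈ S := hmem _ (by rw [abs_of_nonpos (by linarith)]; linarith)
  have hm2 : t0 + ε / 2 ∈ S := hmem _ (by rw [abs_of_nonneg (by linarith)]; linarith)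
  refine ⟨hxeq ▸ hxa, hyeq ▸ hya, ?_, ?_⟩
  · rw [hxeq]; exact hxa.2 hm1
  · rw [hyeq]; exact hya.2 hm2

/-- Cone lemma: if `z` is within `δ` of a convex set containing `ball q0 ε`, then a convex
combination of `q0` and `z` with small weight on `q0` lies in the set. -/
lemma cone_mem {E : Type*} [NormedAddCommGroup E] [NormedSpace ℝ E]
    {C : Set E} (hC : Convex ℝ C) {q0 : E} {ε : ℝ} (hε : 0 < ε)
    (hball : ball q0 ε ⊆ C) {z : E} {δ : ℝ} (hδ : 0 < δ) (hzd : infDist z C ≤ δ) :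
    ∃ lam : ℝ, 0 < lam ∧ lam ≤ 3 * δ / ε ∧ lam • q0 + (1 - lam) • z ∈ C := by
  have hCne : C.Nonempty := ⟨q0, hball (mem_ball_self hε)⟩
  obtain ⟨c, hcC, hdc⟩ := (infDist_lt_iff hCne).1 (lt_of_le_of_lt hzd (by linarith : δ < 2 * δ))
  set lam : ℝ := 3 * δ / (3 * δ + ε) with hlam_def
  have hden : 0 < 3 * δ + ε := by linarith
  have hlam0 : 0 < lam := by positivity
  have hlam1 : lam < 1 := by rw [hlam_def, div_lt_one hden]; linarith
  refine ⟨lam, hlam0, ?_, ?_⟩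
  · rw [hlam_def]
    exact div_le_div_of_nonneg_left (by linarith) hε (by linarith)
  · set w : E := q0 + (lam⁻¹ * (1 - lam)) • (z - c) with hw_def
    have hwball : w ∈ ball q0 ε := by
      rw [mem_ball, dist_eq_norm, hw_def, add_sub_cancel_left, norm_smul, Real.norm_eq_abs]
      have hco : lam⁻¹ * (1 - lam) = ε / (3 * δ) := by
        rw [hlam_def]; field_simp; ring
      rw [hco, abs_of_nonneg (by positivity : (0:ℝ) ≤ ε / (3 * δ))]
      have hzc : ‖z - c‖ < 2 * δ := by rwa [← dist_eq_norm]
      calc ε / (3 * δ) * ‖z - c‖ < ε / (3 * δ) * (2 * δ) := by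
            apply mul_lt_mul_of_pos_left hzc (by positivity)
        _ = 2 * ε / 3 := by field_simp
        _ < ε := by linarith
    have hcomb := hC (hball hwball) hcC hlam0.le (by linarith : (0:ℝ) ≤ 1 - lam) (by ring)
    have heq : lam • w + (1 - lam) • c = lam • q0 + (1 - lam) • z := by
      rw [hw_def, smul_add, smul_smul]
      have : lam * (lam⁻¹ * (1 - lam)) = 1 - lam := by
        field_simp
      rw [this, smul_sub]
      abel
    rwa [heq] at hcomb

end Aux

/-- Let convex bodies `K_n → K` in the Hausdorff metric and lines `l_n = p_n + ℝ v_n` converge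
to a line `l = p + ℝ v` (unit direction vectors) meeting `int K`.  Then for large `n` the line
`l_n` meets `int (K_n)` in an open segment; moreover, parametrizing the chords by least and
greatest parameters, the midpoints of the segments converge to the midpoint of `l ∩ K`, and
their lengths converge to its length. -/
theorem stmt9 (d : ℕ) (K : Set (EuclideanSpace ℝ (Fin d)))
    (Kn : ℕ → Set (EuclideanSpace ℝ (Fin d)))
    (hKconv : Convex ℝ K) (hKcomp : IsCompact K) (hKint : (interior K).Nonempty)
    (hKn : ∀ n, Convex ℝ (Kn n) ∧ IsCompact (Kn n) ∧ (interior (Kn n)).Nonempty)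
    (hconv : Tendsto (fun n => Metric.hausdorffDist (Kn n) K) atTop (nhds 0))
    (p : EuclideanSpace ℝ (Fin d)) (v : EuclideanSpace ℝ (Fin d)) (hv : ‖v‖ = 1)
    (pn : ℕ → EuclideanSpace ℝ (Fin d)) (vn : ℕ → EuclideanSpace ℝ (Fin d))
    (hvn : ∀ n, ‖vn n‖ = 1)
    (hpn : Tendsto pn atTop (nhds p)) (hvnlim : Tendsto vn atTop (nhds v))
    (hmeet : ∃ t : ℝ, p + t • v ∈ interior K) :
    ∃ (N : ℕ) (x y : ℝ) (xn yn : ℕ → ℝ),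
      IsLeast {t : ℝ | p + t • v ∈ K} x ∧ IsGreatest {t : ℝ | p + t • v ∈ K} y ∧ x < y ∧
      (∀ n ≥ N,
        (∃ t : ℝ, pn n + t • vn n ∈ interior (Kn n)) ∧
        IsLeast {t : ℝ | pn n + t • vn n ∈ Kn n} (xn n) ∧
        IsGreatest {t : ℝ | pn n + t • vn n ∈ Kn n} (yn n) ∧ xn n < yn n) ∧
      Tendsto (fun n => pn n + (((xn n + yn n) / 2) • vn n)) atTop
        (nhds (p + ((x + y) / 2) • v)) ∧
      Tendsto (fun n => yn n - xn n) atTop (nhds (y - x)) := by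
  classical
  obtain ⟨t0, ht0⟩ := hmeet
  set q0 := p + t0 • v with hq0_def
  obtain ⟨ε, hε, hballi⟩ : ∃ ε > 0, ball q0 ε ⊆ interior K :=
    Metric.isOpen_iff.1 isOpen_interior q0 ht0
  have hball : ball q0 ε ⊆ K := hballi.trans interior_subset
  set S := {t : ℝ | p + t • v ∈ K} with hS_def
  obtain ⟨hLx, hGy, hxle, hyge⟩ := chord_struct hKcomp p v hv t0 hε hball
  set x := sInf S with hx_def
  set y := sSup S with hy_def
  have hxy : x < y := lt_of_le_of_lt hxle (lt_of_lt_of_le (by linarith) hyge)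
  -- basic facts
  have hKne : K.Nonempty := hKint.mono interior_subset
  have hKnne : ∀ n, (Kn n).Nonempty := fun n => ((hKn n).2.2).mono interior_subset
  have hEne : ∀ n, EMetric.hausdorffEdist (Kn n) K ≠ ⊤ := fun n =>
    Metric.hausdorffEdist_ne_top_of_nonempty_of_bounded (hKnne n) hKne
      (hKn n).2.1.isBounded hKcomp.isBounded
  have hEne' : ∀ n, EMetric.hausdorffEdist K (Kn n) ≠ ⊤ := fun n => by
    show hausdorffEDist K (Kn n) ≠ ⊤; rw [hausdorffEDist_comm]; exact hEne n
  have hdist0 : ∀ η : ℝ, 0 < η → ∀ᶠ n in atTop, hausdorffDist (Kn n) K < η := by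
    intro η hη
    filter_upwards [Metric.tendsto_nhds.1 hconv η hη] with n hn
    rw [Real.dist_eq, sub_zero] at hn
    exact lt_of_le_of_lt (le_abs_self _) hn
  -- interior stability under Hausdorff convergence
  have hint : ∀ (q : EuclideanSpace ℝ (Fin d)) (r : ℝ), 0 < r → ball q r ⊆ K →
      ∀ᶠ n in atTop, ball q (r / 2) ⊆ interior (Kn n) := by
    intro q r hr hqK
    filter_upwards [hdist0 (r / 2) (by linarith)] with n hn
    have hsub : ∀ w ∈ ball q r, infDist w (Kn n) ≤ r / 2 := by
      intro w hw
      have h1 : infDist w (Kn n) ≤ hausdorffDist K (Kn n) :=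
        infDist_le_hausdorffDist_of_mem (hqK hw) (hEne' n)
      rw [hausdorffDist_comm] at h1
      linarith
    have h2 := sep_ball_subset (hKn n).1 (hKn n).2.1.isClosed (hKnne n) q
      (by linarith : (0:ℝ) ≤ r / 2) (by linarith : r / 2 < r) hsub
    have h3 : ball q (r / 2) ⊆ Kn n := by
      have : r - r / 2 = r / 2 := by ring
      rwa [this] at h2
    exact interior_maximal h3 isOpen_ball
  -- convergence of the parametrized points
  have hline : ∀ s : ℝ, Tendsto (fun n => pn n + s • vn n) atTop (nhds (p + s • v)) :=
    fun s => hpn.add (hvnlim.const_smul s)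
  have hmem_ev : ∀ s : ℝ, p + s • v ∈ interior K →
      ∀ᶠ n in atTop, pn n + s • vn n ∈ interior (Kn n) := by
    intro s hs
    obtain ⟨r, hr, hrsub⟩ := Metric.isOpen_iff.1 isOpen_interior _ hs
    filter_upwards [hint _ r hr (hrsub.trans interior_subset),
      Metric.tendsto_nhds.1 (hline s) (r / 2) (by linarith)] with n h1 h2
    exact h1 h2
  -- interior points of the limit chord
  have hintpt : ∀ s : ℝ, x < s → s < y → p + s • v ∈ interior K := by
    intro s hsx hsy
    rcases lt_trichotomy s t0 with h | h | h
    · set a := (s - x) / (t0 - x) with ha_def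
      have htx : x < t0 := lt_trans hsx h
      have ha0 : 0 < a := div_pos (by linarith) (by linarith)
      have ha1 : a < 1 := (div_lt_one (by linarith)).2 (by linarith)
      have hcombo := hKconv.combo_interior_self_mem_interior ht0 hLx.1 ha0
        (by linarith : (0:ℝ) ≤ 1 - a) (by ring)
      have hs_eq : a * t0 + (1 - a) * x = s := by
        have hne : t0 - x ≠ 0 := ne_of_gt (by linarith)
        rw [ha_def]; field_simp; ring
      have heq : a • q0 + (1 - a) • (p + x • v) = p + s • v := by
        rw [hq0_def, ← hs_eq]; module
      exact heq ▸ hcombo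
    · rw [h]; exact ht0
    · set a := (s - y) / (t0 - y) with ha_def
      have hty : t0 < y := lt_trans h hsy
      have ha0 : 0 < a := div_pos_of_neg_of_neg (by linarith) (by linarith)
      have ha1 : a < 1 := by
        rw [ha_def, div_lt_one_iff]
        right; right; exact ⟨by linarith, by linarith⟩
      have hcombo := hKconv.combo_interior_self_mem_interior ht0 hGy.1 ha0
        (by linarith : (0:ℝ) ≤ 1 - a) (by ring)
      have hs_eq : a * t0 + (1 - a) * y = s := by
        have hne : t0 - y ≠ 0 := ne_of_lt (by linarith)
        rw [ha_def]; field_simp; ring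
      have heq : a • q0 + (1 - a) • (p + y • v) = p + s • v := by
        rw [hq0_def, ← hs_eq]; module
      exact heq ▸ hcombo
  -- bounds
  obtain ⟨R0, hR0⟩ := hKcomp.isBounded.subset_closedBall 0
  set R := max R0 0 with hR_def
  have hRK : K ⊆ closedBall 0 R := hR0.trans (closedBall_subset_closedBall (le_max_left _ _))
  have hRnn : 0 ≤ R := le_max_right _ _
  set M : ℝ := R + 3 + ‖p‖ + |t0| with hM_def
  have hM3 : 3 ≤ M := by
    have := norm_nonneg p; have := abs_nonneg t0; linarith
  have ev_bd : ∀ᶠ n in atTop, ∀ t : ℝ, pn n + t • vn n ∈ Kn n → |t - t0| ≤ M ∧ |t| ≤ M := by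
    filter_upwards [hdist0 1 one_pos, Metric.tendsto_nhds.1 hpn 1 one_pos] with n h1 h2
    intro t ht
    have hz1 : infDist (pn n + t • vn n) K ≤ hausdorffDist (Kn n) K :=
      infDist_le_hausdorffDist_of_mem ht (hEne n)
    obtain ⟨k, hk, hdk⟩ := (infDist_lt_iff hKne).1 (lt_of_le_of_lt hz1 h1)
    have hknorm : ‖k‖ ≤ R := by
      have := hRK hk; rwa [mem_closedBall, dist_zero_right] at this
    have hznorm : ‖pn n + t • vn n‖ ≤ R + 1 := by
      calc ‖pn n + t • vn n‖ ≤ ‖pn n + t • vn n - k‖ + ‖k‖ := by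
            simpa using norm_add_le (pn n + t • vn n - k) k
        _ ≤ R + 1 := by
            rw [← dist_eq_norm]; linarith
    have hpnn : ‖pn n‖ ≤ ‖p‖ + 1 := by
      calc ‖pn n‖ ≤ ‖pn n - p‖ + ‖p‖ := by simpa using norm_add_le (pn n - p) p
        _ ≤ ‖p‖ + 1 := by
            have h3 : dist (pn n) p < 1 := h2
            rw [dist_eq_norm] at h3; linarith
    have htt : |t| ≤ R + 2 + ‖p‖ := by
      have he : ‖t • vn n‖ = ‖pn n + t • vn n - pn n‖ := by rw [add_sub_cancel_left]
      rw [norm_smul, hvn n, mul_one, Real.norm_eq_abs] at he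
      have h3 : ‖pn n + t • vn n - pn n‖ ≤ ‖pn n + t • vn n‖ + ‖pn n‖ := norm_sub_le _ _
      linarith
    constructor
    · calc |t - t0| ≤ |t| + |t0| := abs_sub t t0
        _ ≤ M := by rw [hM_def]; linarith
    · rw [hM_def]; have := abs_nonneg t0; linarith
  -- eventual membership of fixed interior parameters
  have hcover : ∀ s : ℝ, x < s → s < y → ∀ᶠ n in atTop, pn n + s • vn n ∈ Kn n := by
    intro s h1 h2
    filter_upwards [hmem_ev s (hintpt s h1 h2)] with n hn
    exact interior_subset hn
  -- segment endpoints for Kn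
  set xn : ℕ → ℝ := fun n => sInf {t : ℝ | pn n + t • vn n ∈ Kn n} with hxn_def
  set yn : ℕ → ℝ := fun n => sSup {t : ℝ | pn n + t • vn n ∈ Kn n} with hyn_def
  set s₁ : ℝ := t0 - ε / 4 with hs₁_def
  set s₂ : ℝ := t0 + ε / 4 with hs₂_def
  have hs₁x : x < s₁ := by rw [hs₁_def]; linarith
  have hs₁y : s₁ < y := by rw [hs₁_def]; linarith
  have hs₂x : x < s₂ := by rw [hs₂_def]; linarith
  have hs₂y : s₂ < y := by rw [hs₂_def]; linarith
  have ev_struct : ∀ᶠ n in atTop,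
      (∃ t : ℝ, pn n + t • vn n ∈ interior (Kn n)) ∧
      IsLeast {t : ℝ | pn n + t • vn n ∈ Kn n} (xn n) ∧
      IsGreatest {t : ℝ | pn n + t • vn n ∈ Kn n} (yn n) ∧ xn n < yn n := by
    filter_upwards [hmem_ev s₁ (hintpt s₁ hs₁x hs₁y), hcover s₂ hs₂x hs₂y] with n h1 h2
    obtain ⟨r, hr, hrsub⟩ := Metric.isOpen_iff.1 isOpen_interior _ h1
    obtain ⟨hL, hG, hle, _⟩ := chord_struct (hKn n).2.1 (pn n) (vn n) (hvn n) s₁ hr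
      (hrsub.trans interior_subset)
    refine ⟨⟨s₁, h1⟩, hL, hG, ?_⟩
    have hs2yn : s₂ ≤ yn n := hG.2 h2
    have : xn n ≤ s₁ - r / 2 := hle
    rw [hs₁_def] at this; rw [hs₂_def] at hs2yn
    linarith
  -- two-sided closeness of chord parameters
  have hclose : ∀ η : ℝ, 0 < η → ∀ᶠ n in atTop, ∀ t : ℝ,
      pn n + t • vn n ∈ Kn n → x - η < t ∧ t < y + η := by
    intro η hη
    set δη : ℝ := ε * η / (6 * M + 6) with hδη_def
    have h6M : (0:ℝ) < 6 * M + 6 := by linarith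
    have hδη : 0 < δη := by rw [hδη_def]; positivity
    set θ : ℝ := δη / (3 * (M + 1)) with hθ_def
    have hθpos : 0 < θ := by rw [hθ_def]; positivity
    filter_upwards [hdist0 (δη / 3) (by linarith), Metric.tendsto_nhds.1 hpn (δη / 3)
      (by linarith), Metric.tendsto_nhds.1 hvnlim θ hθpos, ev_bd] with n h1 h2 h3 hbd
    intro t ht
    obtain ⟨hbd1, hbd2⟩ := hbd t ht
    have hz1 : infDist (pn n + t • vn n) K ≤ hausdorffDist (Kn n) K :=
      infDist_le_hausdorffDist_of_mem ht (hEne n)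
    have hz2 : infDist (p + t • v) K ≤ infDist (pn n + t • vn n) K
        + dist (p + t • v) (pn n + t • vn n) := infDist_le_infDist_add_dist
    have hdist_pt : dist (p + t • v) (pn n + t • vn n) ≤ dist p (pn n) + |t| * dist v (vn n) := by
      calc dist (p + t • v) (pn n + t • vn n)
          ≤ dist p (pn n) + dist (t • v) (t • vn n) := dist_add_add_le _ _ _ _
        _ = dist p (pn n) + |t| * dist v (vn n) := by
            rw [dist_smul₀, Real.norm_eq_abs]
    have hinf : infDist (p + t • v) K ≤ δη := by
      have hvb : |t| * dist v (vn n) ≤ δη / 3 := by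
        have hd3 : dist v (vn n) ≤ θ := by rw [dist_comm]; exact (h3).le
        have hM1 : (0:ℝ) < 3 * (M + 1) := by linarith
        have hMθ : M * θ ≤ δη / 3 := by
          rw [hθ_def]
          calc M * (δη / (3 * (M + 1))) = M * δη / (3 * (M + 1)) := by ring
            _ ≤ δη / 3 := by
                rw [div_le_div_iff₀ hM1 (by norm_num : (0:ℝ) < 3)]
                nlinarith [hδη.le]
        calc |t| * dist v (vn n) ≤ M * θ :=
              mul_le_mul hbd2 hd3 dist_nonneg (by linarith)
          _ ≤ δη / 3 := hMθ
      have hpb : dist p (pn n) ≤ δη / 3 := by rw [dist_comm]; exact h2.le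
      linarith
    obtain ⟨lam, hlam0, hlamle, hlam_mem⟩ := cone_mem hKconv hε hball hδη hinf
    have heq : lam • q0 + (1 - lam) • (p + t • v) = p + (lam * t0 + (1 - lam) * t) • v := by
      rw [hq0_def]; module
    have hsS : lam * t0 + (1 - lam) * t ∈ S := by
      rw [hS_def]; exact mem_setOf.2 (heq ▸ hlam_mem)
    have hsx : x ≤ lam * t0 + (1 - lam) * t := hLx.2 hsS
    have hsy : lam * t0 + (1 - lam) * t ≤ y := hGy.2 hsS
    have hgap : |t - (lam * t0 + (1 - lam) * t)| ≤ 3 * δη / ε * M := by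
      have hrw : t - (lam * t0 + (1 - lam) * t) = lam * (t - t0) := by ring
      rw [hrw, abs_mul, abs_of_pos hlam0]
      exact mul_le_mul hlamle hbd1 (abs_nonneg _)
        (div_nonneg (by linarith [hδη.le]) hε.le)
    have hfin : 3 * δη / ε * M < η := by
      have hkey : 3 * δη / ε * M = 3 * M * η / (6 * M + 6) := by
        rw [hδη_def]; field_simp
      rw [hkey, div_lt_iff₀ h6M]
      nlinarith
    obtain ⟨hg1, hg2⟩ := abs_le.1 hgap
    constructor
    · linarith
    · linarith
  -- convergence of endpoints
  have hxtend : Tendsto xn atTop (nhds x) := by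
    rw [Metric.tendsto_nhds]
    intro η hη
    set s' : ℝ := min (x + η / 2) s₁ with hs'_def
    have hs'x : x < s' := lt_min (by linarith) hs₁x
    have hs'y : s' < y := lt_of_le_of_lt (min_le_right _ _) hs₁y
    filter_upwards [hclose η hη, hcover s' hs'x hs'y, ev_struct] with n h1 h2 h3
    have hlow : x - η < xn n := (h1 (xn n) h3.2.1.1).1
    have hupp : xn n ≤ s' := h3.2.1.2 h2
    have hs'le : s' ≤ x + η / 2 := min_le_left _ _
    rw [Real.dist_eq, abs_lt]
    constructor <;> linarith
  have hytend : Tendsto yn atTop (nhds y) := by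
    rw [Metric.tendsto_nhds]
    intro η hη
    set s' : ℝ := max (y - η / 2) s₂ with hs'_def
    have hs'x : x < s' := lt_of_lt_of_le hs₂x (le_max_right _ _)
    have hs'y : s' < y := max_lt (by linarith) hs₂y
    filter_upwards [hclose η hη, hcover s' hs'x hs'y, ev_struct] with n h1 h2 h3
    have hupp : yn n < y + η := (h1 (yn n) h3.2.2.1.1).2
    have hlow : s' ≤ yn n := h3.2.2.1.2 h2
    have hs'ge : y - η / 2 ≤ s' := le_max_left _ _
    rw [Real.dist_eq, abs_lt]
    constructor <;> linarith
  obtain ⟨N, hN⟩ := eventually_atTop.1 ev_struct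
  exact ⟨N, x, y, xn, yn, hLx, hGy, hxy, fun n hn => hN n hn,
    hpn.add (((hxtend.add hytend).div_const 2).smul hvnlim), hytend.sub hxtend⟩
end
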